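/- Under any reward parameter θ, the likelihood objective decomposes as L(θ) = L̂(θ) + (γ/(1−γ)) · E_{(s,a)∼d^E}[ Σ_{s'∈S} V_θ(s') ( P̂(s'|s,a) − P(s'|s,a) ) ], where L̂ is the surrogate objective. -/
import Mathlib


open Real BigOperators Finset

noncomputable section

/-- `P` is a transition kernel: each row `P s a ·` is a probability distribution. -/
def IsKernel {S A : Type} [Fintype S] (P : S → A → S → ℝ) : Prop :=
  (∀ s a s', 0 ≤ P s a s') ∧ ∀ s a, ∑ s', P s a s' = 1

/-- `p` is a policy: each `p s ·` is a probability distribution over actions. -/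
def IsPolicy {S A : Type} [Fintype A] (p : S → A → ℝ) : Prop :=
  (∀ s a, 0 ≤ p s a) ∧ ∀ s, ∑ a, p s a = 1

/-- `η` is a probability distribution over states. -/
def IsDist {S : Type} [Fintype S] (η : S → ℝ) : Prop :=
  (∀ s, 0 ≤ η s) ∧ ∑ s, η s = 1

/-- Distribution of the state at time `t` under initial distribution `η`,
policy `pol` and transition kernel `P`. -/
def stateDist {S A : Type} [Fintype S] [Fintype A]
    (P : S → A → S → ℝ) (pol : S → A → ℝ) (η : S → ℝ) : ℕ → S → ℝ
  | 0 => η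
  | (t + 1) => fun s' => ∑ s, ∑ a, stateDist P pol η t s * pol s a * P s a s'

/-- `E_{τ ∼ (η, pol, P)} [ ∑_t γ^t f(s_t, a_t) ]`. -/
def discSum {S A : Type} [Fintype S] [Fintype A]
    (γ : ℝ) (P : S → A → S → ℝ) (pol : S → A → ℝ) (η : S → ℝ) (f : S → A → ℝ) : ℝ :=
  ∑' t : ℕ, γ ^ t * ∑ s, ∑ a, stateDist P pol η t s * pol s a * f s a

/-- Discounted state-action visitation measure
`d(s,a) = (1-γ) pol(a|s) ∑_t γ^t Pr(s_t = s)`. -/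
def visit {S A : Type} [Fintype S] [Fintype A]
    (γ : ℝ) (P : S → A → S → ℝ) (pol : S → A → ℝ) (η : S → ℝ) (s : S) (a : A) : ℝ :=
  (1 - γ) * pol s a * ∑' t : ℕ, γ ^ t * stateDist P pol η t s

/-- Log-sum-exp soft value function `V(s) = log ∑_a exp Q(s,a)`. -/
def lse {S A : Type} [Fintype A] (Q : S → A → ℝ) (s : S) : ℝ :=
  Real.log (∑ a, Real.exp (Q s a))

/-- Softmax policy `π(a|s) = exp Q(s,a) / ∑_{a'} exp Q(s,a')`. -/
def softmax {S A : Type} [Fintype A] (Q : S → A → ℝ) (s : S) (a : A) : ℝ :=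
  Real.exp (Q s a) / ∑ a', Real.exp (Q s a')

section helpers

variable {S A : Type} [Fintype S] [Fintype A]
variable {γ : ℝ} {P : S → A → S → ℝ} {pol : S → A → ℝ} {η : S → ℝ}

lemma stateDist_nonneg (hP : IsKernel P) (hpol : IsPolicy pol) (hη : IsDist η) :
    ∀ t s, 0 ≤ stateDist P pol η t s := by
  intro t
  induction t with
  | zero => exact hη.1
  | succ t ih =>
    intro s'
    refine Finset.sum_nonneg fun s _ => Finset.sum_nonneg fun a _ => ?_
    exact mul_nonneg (mul_nonneg (ih s) (hpol.1 s a)) (hP.1 s a s')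

lemma stateDist_sum_one (hP : IsKernel P) (hpol : IsPolicy pol) (hη : IsDist η) :
    ∀ t, ∑ s, stateDist P pol η t s = 1 := by
  intro t
  induction t with
  | zero => exact hη.2
  | succ t ih =>
    show ∑ s', ∑ s, ∑ a, stateDist P pol η t s * pol s a * P s a s' = 1
    rw [Finset.sum_comm]
    have : ∀ s, ∑ s', ∑ a, stateDist P pol η t s * pol s a * P s a s'
        = stateDist P pol η t s := by
      intro s
      rw [Finset.sum_comm]
      calc ∑ a, ∑ s', stateDist P pol η t s * pol s a * P s a s'
          = ∑ a, stateDist P pol η t s * pol s a * ∑ s', P s a s' := by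
            refine Finset.sum_congr rfl fun a _ => ?_
            rw [Finset.mul_sum]
        _ = ∑ a, stateDist P pol η t s * pol s a := by simp [hP.2]
        _ = stateDist P pol η t s * ∑ a, pol s a := by rw [Finset.mul_sum]
        _ = stateDist P pol η t s := by rw [hpol.2, mul_one]
    simp only [this, ih]

lemma stateDist_le_one (hP : IsKernel P) (hpol : IsPolicy pol) (hη : IsDist η)
    (t : ℕ) (s : S) : stateDist P pol η t s ≤ 1 := by
  calc stateDist P pol η t s
      ≤ ∑ s', stateDist P pol η t s' :=
        Finset.single_le_sum (fun s' _ => stateDist_nonneg hP hpol hη t s')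
          (Finset.mem_univ s)
    _ = 1 := stateDist_sum_one hP hpol hη t

lemma pol_le_one (hpol : IsPolicy pol) (s : S) (a : A) : pol s a ≤ 1 := by
  calc pol s a ≤ ∑ a', pol s a' :=
        Finset.single_le_sum (fun a' _ => hpol.1 s a') (Finset.mem_univ a)
    _ = 1 := hpol.2 s

lemma inner_abs_le (hP : IsKernel P) (hpol : IsPolicy pol) (hη : IsDist η)
    (f : S → A → ℝ) (C : ℝ) (hC : ∀ s a, |f s a| ≤ C) (t : ℕ) :
    |∑ s, ∑ a, stateDist P pol η t s * pol s a * f s a| ≤ C := by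
  calc |∑ s, ∑ a, stateDist P pol η t s * pol s a * f s a|
      ≤ ∑ s, |∑ a, stateDist P pol η t s * pol s a * f s a| :=
        Finset.abs_sum_le_sum_abs _ _
    _ ≤ ∑ s, ∑ a, |stateDist P pol η t s * pol s a * f s a| :=
        Finset.sum_le_sum fun s _ => Finset.abs_sum_le_sum_abs _ _
    _ ≤ ∑ s, ∑ a, stateDist P pol η t s * pol s a * C := by
        refine Finset.sum_le_sum fun s _ => Finset.sum_le_sum fun a _ => ?_
        rw [abs_mul, abs_of_nonneg (mul_nonneg (stateDist_nonneg hP hpol hη t s) (hpol.1 s a))]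
        exact mul_le_mul_of_nonneg_left (hC s a)
          (mul_nonneg (stateDist_nonneg hP hpol hη t s) (hpol.1 s a))
    _ = (∑ s, stateDist P pol η t s) * C := by
        rw [Finset.sum_mul]
        refine Finset.sum_congr rfl fun s _ => ?_
        rw [← Finset.sum_mul, ← Finset.mul_sum, hpol.2, mul_one]
    _ = C := by rw [stateDist_sum_one hP hpol hη t, one_mul]

lemma bound_exists (f : S → A → ℝ) : ∀ s a, |f s a| ≤ ∑ s', ∑ a', |f s' a'| := by
  intro s a
  calc |f s a| ≤ ∑ a', |f s a'| :=
        Finset.single_le_sum (f := fun a' => |f s a'|) (fun a' _ => abs_nonneg _)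
          (Finset.mem_univ a)
    _ ≤ ∑ s', ∑ a', |f s' a'| :=
        Finset.single_le_sum (f := fun s' => ∑ a', |f s' a'|)
          (fun s' _ => Finset.sum_nonneg fun a' _ => abs_nonneg _) (Finset.mem_univ s)

lemma summable_disc (hγ : γ ∈ Set.Ioo (0:ℝ) 1) (hP : IsKernel P) (hpol : IsPolicy pol)
    (hη : IsDist η) (f : S → A → ℝ) :
    Summable (fun t => γ ^ t * ∑ s, ∑ a, stateDist P pol η t s * pol s a * f s a) := by
  set C := ∑ s', ∑ a', |f s' a'| with hCdef
  apply Summable.of_abs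
  refine Summable.of_nonneg_of_le (fun t => abs_nonneg _) (fun t => ?_)
    (((summable_geometric_of_lt_one hγ.1.le hγ.2).mul_left C))
  rw [abs_mul, abs_pow, abs_of_pos hγ.1, mul_comm C (γ ^ t)]
  exact mul_le_mul_of_nonneg_left
    (inner_abs_le hP hpol hη f C (bound_exists f) t) (pow_nonneg hγ.1.le t)

lemma summable_gd (hγ : γ ∈ Set.Ioo (0:ℝ) 1) (hP : IsKernel P) (hpol : IsPolicy pol)
    (hη : IsDist η) (s : S) :
    Summable (fun t => γ ^ t * stateDist P pol η t s) := by
  refine Summable.of_nonneg_of_le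
    (fun t => mul_nonneg (pow_nonneg hγ.1.le t) (stateDist_nonneg hP hpol hη t s))
    (fun t => ?_) (summable_geometric_of_lt_one hγ.1.le hγ.2)
  calc γ ^ t * stateDist P pol η t s ≤ γ ^ t * 1 :=
        mul_le_mul_of_nonneg_left (stateDist_le_one hP hpol hη t s) (pow_nonneg hγ.1.le t)
    _ = γ ^ t := mul_one _

end helpers

/-- **Lemma 1, objective decomposition.**
Under any reward parameter `θ`, the likelihood objective
`L(θ) = E_{τ ∼ (η, πᴱ, P)}[∑_t γ^t log π_θ(a_t|s_t)]` decomposes as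
`L(θ) = L̂(θ) + γ/(1-γ) · E_{(s,a) ∼ dᴱ}[ ∑_{s'} V_θ(s') (P̂(s'|s,a) - P(s'|s,a)) ]`,
where `L̂` is the surrogate objective, `V_θ = lse (Q θ)` is the optimal soft value
function and `π_θ = softmax (Q θ)` is the optimal entropy-regularized policy of the
conservative MDP with kernel `P̂` and reward `r(·,·;θ) + U`. -/
theorem stmt0 {S A : Type} [Fintype S] [Fintype A] [Nonempty S] [Nonempty A] (d : ℕ)
    (γ : ℝ) (hγ : γ ∈ Set.Ioo (0 : ℝ) 1)
    (P : S → A → S → ℝ) (hP : IsKernel P)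
    (Phat : S → A → S → ℝ) (hPhat : IsKernel Phat)
    (η : S → ℝ) (hη : IsDist η)
    (piE : S → A → ℝ) (hpiE : IsPolicy piE)
    (r : S → A → EuclideanSpace ℝ (Fin d) → ℝ) (U : S → A → ℝ)
    (Q : EuclideanSpace ℝ (Fin d) → S → A → ℝ)
    (hQ : ∀ θ s a, Q θ s a = r s a θ + U s a + γ * ∑ s', Phat s a s' * lse (Q θ) s')
    (θ : EuclideanSpace ℝ (Fin d)) :
    discSum γ P piE η (fun s a => Real.log (softmax (Q θ) s a)) =
      (discSum γ P piE η (fun s a => r s a θ + U s a) - ∑ s, η s * lse (Q θ) s)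
      + γ / (1 - γ) *
          ∑ s, ∑ a, visit γ P piE η s a *
            ∑ s', lse (Q θ) s' * (Phat s a s' - P s a s') := by
  obtain ⟨hγ0, hγ1⟩ := hγ
  have hγmem : γ ∈ Set.Ioo (0:ℝ) 1 := ⟨hγ0, hγ1⟩
  set V : S → ℝ := lse (Q θ) with hVdef
  set D : ℕ → S → ℝ := stateDist P piE η with hDdef
  set f1 : S → A → ℝ := fun s a => r s a θ + U s a with hf1
  set g : S → A → ℝ := fun s a => ∑ s', P s a s' * V s' with hg
  set w : S → A → ℝ := fun s a => ∑ s', V s' * (Phat s a s' - P s a s') with hw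
  -- pointwise log-softmax identity
  have hlog : ∀ s a, Real.log (softmax (Q θ) s a)
      = f1 s a + γ * g s a + γ * w s a - V s := by
    intro s a
    have hpos : 0 < ∑ a', Real.exp (Q θ s a') :=
      Finset.sum_pos (fun a' _ => Real.exp_pos _) Finset.univ_nonempty
    have h1 : Real.log (softmax (Q θ) s a) = Q θ s a - V s := by
      rw [softmax, Real.log_div (Real.exp_ne_zero _) (ne_of_gt hpos), Real.log_exp]
      rfl
    have h2 : γ * (∑ s', Phat s a s' * V s') = γ * g s a + γ * w s a := by
      rw [← mul_add, hg, hw]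
      simp only []
      rw [← Finset.sum_add_distrib]
      congr 1
      refine Finset.sum_congr rfl fun s' _ => ?_
      ring
    rw [h1, hQ θ s a, h2, hf1]
    ring
  -- inner sums
  set In : (S → A → ℝ) → ℕ → ℝ :=
    fun f t => ∑ s, ∑ a, D t s * piE s a * f s a with hIn
  have hS1 := summable_disc hγmem hP hpiE hη f1
  have hSg := summable_disc hγmem hP hpiE hη g
  have hSw := summable_disc hγmem hP hpiE hη w
  have hSV := summable_disc hγmem hP hpiE hη (fun s _ => V s)
  -- split of the likelihood
  have hsplit : ∀ t, In (fun s a => Real.log (softmax (Q θ) s a)) t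
      = In f1 t + γ * In g t + γ * In w t - In (fun s _ => V s) t := by
    intro t
    simp only [hIn]
    calc ∑ s, ∑ a, D t s * piE s a * Real.log (softmax (Q θ) s a)
        = ∑ s, ∑ a, (D t s * piE s a * f1 s a + γ * (D t s * piE s a * g s a)
            + γ * (D t s * piE s a * w s a) - D t s * piE s a * V s) := by
          refine Finset.sum_congr rfl fun s _ => Finset.sum_congr rfl fun a _ => ?_
          rw [hlog s a]; ring
      _ = _ := by
          simp only [Finset.sum_add_distrib, Finset.sum_sub_distrib, ← Finset.mul_sum]
  -- telescoping pieces
  set h : ℕ → ℝ := fun t => ∑ s, D t s * V s with hh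
  have hInV : ∀ t, In (fun s _ => V s) t = h t := by
    intro t
    refine Finset.sum_congr rfl fun s _ => ?_
    calc ∑ a, D t s * piE s a * V s = ∑ a, D t s * V s * piE s a := by
          refine Finset.sum_congr rfl fun a _ => ?_; ring
      _ = D t s * V s * ∑ a, piE s a := by rw [← Finset.mul_sum]
      _ = D t s * V s := by rw [hpiE.2, mul_one]
  have hIng : ∀ t, In g t = h (t + 1) := by
    intro t
    have hD1 : ∀ s', D (t+1) s' = ∑ s, ∑ a, D t s * piE s a * P s a s' := fun s' => rfl
    calc In g t = ∑ s, ∑ a, ∑ s', D t s * piE s a * (P s a s' * V s') := by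
          refine Finset.sum_congr rfl fun s _ => Finset.sum_congr rfl fun a _ => ?_
          exact Finset.mul_sum _ _ _
      _ = ∑ s, ∑ s', ∑ a, D t s * piE s a * (P s a s' * V s') :=
          Finset.sum_congr rfl fun s _ => Finset.sum_comm
      _ = ∑ s', ∑ s, ∑ a, D t s * piE s a * (P s a s' * V s') := Finset.sum_comm
      _ = ∑ s', (∑ s, ∑ a, D t s * piE s a * P s a s') * V s' := by
          refine Finset.sum_congr rfl fun s' _ => ?_
          rw [Finset.sum_mul]
          refine Finset.sum_congr rfl fun s _ => ?_
          rw [Finset.sum_mul]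
          refine Finset.sum_congr rfl fun a _ => ?_
          ring
      _ = h (t + 1) := by
          rw [hh]
          exact Finset.sum_congr rfl fun s' _ => by rw [hD1 s']
  -- summability of the h-series
  have hShfun : (fun t => γ ^ t * In (fun s _ => V s) t) = fun t => γ ^ t * h t := by
    funext t; rw [hInV t]
  have hSh : Summable (fun t => γ ^ t * h t) := by
    rw [← hShfun]; exact hSV
  -- shift identity
  have hshift : ∑' t, γ ^ t * h t = h 0 + γ * ∑' t, γ ^ t * In g t := by
    rw [Summable.tsum_eq_zero_add hSh]
    simp only [pow_zero, one_mul]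
    congr 1
    calc ∑' t, γ ^ (t + 1) * h (t + 1)
        = ∑' t, γ * (γ ^ t * h (t + 1)) := by
          refine tsum_congr fun t => ?_; ring
      _ = γ * ∑' t, γ ^ t * h (t + 1) := tsum_mul_left
      _ = γ * ∑' t, γ ^ t * In g t := by
          congr 1
          exact tsum_congr fun t => by rw [hIng t]
  -- main expansion of LHS
  have hLHS : discSum γ P piE η (fun s a => Real.log (softmax (Q θ) s a))
      = (∑' t, γ ^ t * In f1 t) + γ * (∑' t, γ ^ t * In g t)
        + γ * (∑' t, γ ^ t * In w t) - (∑' t, γ ^ t * h t) := by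
    rw [discSum]
    have : (fun t => γ ^ t * ∑ s, ∑ a, stateDist P piE η t s * piE s a *
        Real.log (softmax (Q θ) s a))
        = fun t => (γ ^ t * In f1 t + γ * (γ ^ t * In g t) + γ * (γ ^ t * In w t))
          - γ ^ t * In (fun s _ => V s) t := by
      funext t
      have : (∑ s, ∑ a, stateDist P piE η t s * piE s a * Real.log (softmax (Q θ) s a))
          = In (fun s a => Real.log (softmax (Q θ) s a)) t := rfl
      rw [this, hsplit t]; ring
    rw [this, Summable.tsum_sub (((hS1.add (hSg.mul_left γ)).add (hSw.mul_left γ))) (by rw [hShfun]; exact hSh),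
      Summable.tsum_add (hS1.add (hSg.mul_left γ)) (hSw.mul_left γ),
      Summable.tsum_add hS1 (hSg.mul_left γ), tsum_mul_left, tsum_mul_left, hShfun]
  -- h 0 = ∑ η V
  have hh0 : h 0 = ∑ s, η s * V s := rfl
  -- visitation identity
  have hvisit : ∑ s, ∑ a, visit γ P piE η s a * w s a
      = (1 - γ) * ∑' t, γ ^ t * In w t := by
    have step1 : ∀ s a, visit γ P piE η s a * w s a
        = (1 - γ) * (piE s a * w s a * ∑' t, γ ^ t * D t s) := by
      intro s a
      rw [visit]
      ring
    calc ∑ s, ∑ a, visit γ P piE η s a * w s a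
        = ∑ s, (1 - γ) * ((∑ a, piE s a * w s a) * ∑' t, γ ^ t * D t s) := by
          refine Finset.sum_congr rfl fun s _ => ?_
          rw [Finset.sum_mul, Finset.mul_sum]
          exact Finset.sum_congr rfl fun a _ => step1 s a
      _ = (1 - γ) * ∑ s, (∑' t, γ ^ t * D t s * (∑ a, piE s a * w s a)) := by
          rw [Finset.mul_sum]
          refine Finset.sum_congr rfl fun s _ => ?_
          congr 1
          rw [mul_comm]
          exact tsum_mul_right.symm
      _ = (1 - γ) * ∑' t, ∑ s, γ ^ t * D t s * (∑ a, piE s a * w s a) := by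
          congr 1
          exact (Summable.tsum_finsetSum (fun s _ =>
            (summable_gd hγmem hP hpiE hη s).mul_right _)).symm
      _ = (1 - γ) * ∑' t, γ ^ t * In w t := by
          congr 1
          refine tsum_congr fun t => ?_
          rw [hIn, Finset.mul_sum]
          refine Finset.sum_congr rfl fun s _ => ?_
          rw [Finset.mul_sum, Finset.mul_sum]
          refine Finset.sum_congr rfl fun a _ => ?_
          ring
  -- put everything together
  have hne : (1 : ℝ) - γ ≠ 0 := by linarith
  have hd1 : discSum γ P piE η (fun s a => r s a θ + U s a) = ∑' t, γ ^ t * In f1 t := rfl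
  rw [hLHS, hshift, hd1, hh0, hvisit]
  field_simp
  ring
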